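/- arXiv:2601.20983 — 3 statements merged into one kernel-verified Lean document; each statement's English description precedes it below -/
import Mathlib

section
/- For an increasing function g : ℝ₊ⁿ → ℝ, the radial inverse is right-continuous in y: for every x ∈ ℝ₊ⁿ and y ∈ ℝ, lim_{ε ↓ 0} ρ_g(x, y+ε) = ρ_g(x, y) (in the extended reals [0,∞]). -/
open scoped ENNReal

noncomputable def radInv {n : ℕ} (g : (Fin n → ℝ) → ℝ) (x : Fin n → ℝ) (y : ℝ) : ℝ≥0∞ :=
  sInf (ENNReal.ofReal '' {r : ℝ | 0 < r ∧ g (r⁻¹ • x) ≤ y})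

theorem stmt3 {n : ℕ} (g : (Fin n → ℝ) → ℝ)
    (hg : ∀ a b : Fin n → ℝ, 0 ≤ a → a ≤ b → g a ≤ g b)
    (x : Fin n → ℝ) (hx : 0 ≤ x) (y : ℝ) :
    Filter.Tendsto (fun ε : ℝ => radInv g x (y + ε)) (nhdsWithin 0 (Set.Ioi 0))
      (nhds (radInv g x y)) := by
  have hanti : Antitone (fun ε : ℝ => radInv g x (y + ε)) := by
    intro a b hab
    apply sInf_le_sInf
    apply Set.image_mono
    intro r hr
    exact ⟨hr.1, hr.2.trans (by linarith)⟩
  have key : sSup ((fun ε : ℝ => radInv g x (y + ε)) '' Set.Ioi 0) = radInv g x y := by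
    apply le_antisymm
    · apply sSup_le
      rintro _ ⟨ε, hε, rfl⟩
      apply sInf_le_sInf
      apply Set.image_mono
      intro r hr
      exact ⟨hr.1, hr.2.trans (by simp [Set.mem_Ioi] at hε; linarith)⟩
    · by_contra h
      push_neg at h
      obtain ⟨c, hc1, hc2⟩ := exists_between h
      have hcne : c ≠ ⊤ := hc2.ne_top
      set t := c.toReal with ht
      have htpos : 0 < t := ENNReal.toReal_pos (pos_of_gt hc1).ne' hcne
      have hct : ENNReal.ofReal t = c := ENNReal.ofReal_toReal hcne
      -- show g (t⁻¹ • x) ≤ y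
      have hgt : g (t⁻¹ • x) ≤ y := by
        apply le_of_forall_pos_le_add
        intro ε hε
        have hle : radInv g x (y + ε) ≤ sSup ((fun ε : ℝ => radInv g x (y + ε)) '' Set.Ioi 0) :=
          le_sSup ⟨ε, hε, rfl⟩
        have hlt : radInv g x (y + ε) < c := lt_of_le_of_lt hle hc1
        obtain ⟨s, hs, hslt⟩ := sInf_lt_iff.mp hlt
        obtain ⟨r, ⟨hr0, hgr⟩, rfl⟩ := hs
        have hrt : r < t := by
          rw [← hct] at hslt
          exact (ENNReal.ofReal_lt_ofReal_iff htpos).mp hslt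
        have : g (t⁻¹ • x) ≤ g (r⁻¹ • x) := by
          apply hg
          · intro i
            exact mul_nonneg (inv_nonneg.mpr htpos.le) (hx i)
          · intro i
            exact mul_le_mul_of_nonneg_right
              (by exact (inv_le_inv₀ htpos hr0).mpr hrt.le) (hx i)
        linarith
      have : radInv g x y ≤ c := by
        rw [← hct]
        exact sInf_le ⟨t, ⟨htpos, hgt⟩, rfl⟩
      exact absurd hc2 (not_lt.mpr this)
  have := hanti.tendsto_nhdsGT 0
  rwa [key] at this
end

section
/- Let g₁,…,g_m : ℝ₊ⁿ → ℝ be increasing functions and u₁,…,u_m ∈ ℝ, and let 𝒢 = {x ∈ ℝ₊ⁿ : gᵢ(x) ≤ uᵢ for all i}. If 𝒢 is compact and nonempty, then for every x ∈ ℝ₊ⁿ, the monotone projection satisfies π_𝒢(x) = (max_{i∈[m]} ρ_{gᵢ}(x, uᵢ))⁻¹ · x, where ρ_{gᵢ}(x, uᵢ) = inf{r > 0 : gᵢ(x/r) ≤ uᵢ}. -/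
open scoped ENNReal

theorem stmt6 {n m : ℕ} (hm : 0 < m)
    (g : Fin m → (Fin n → ℝ) → ℝ) (u : Fin m → ℝ)
    (hg : ∀ i, ∀ a b : Fin n → ℝ, 0 ≤ a → a ≤ b → g i a ≤ g i b)
    (G : Set (Fin n → ℝ))
    (hG : G = {x : Fin n → ℝ | 0 ≤ x ∧ ∀ i, g i x ≤ u i})
    (hcomp : IsCompact G) (hne : G.Nonempty)
    (x : Fin n → ℝ) (hx : 0 ≤ x) :
    sSup {a : ℝ | 0 ≤ a ∧ a • x ∈ G} • x
      = ((⨆ i, radInv (g i) x (u i))⁻¹).toReal • x := by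
  by_cases hx0 : x = 0
  · subst hx0; simp
  -- basic facts
  have hxnorm : 0 < ‖x‖ := norm_pos_iff.mpr hx0
  set A : Set ℝ := {a : ℝ | 0 ≤ a ∧ a • x ∈ G} with hA
  obtain ⟨y, hy⟩ := hne
  have hyG : 0 ≤ y ∧ ∀ i, g i y ≤ u i := by rw [hG] at hy; exact hy
  have h0G : (0 : Fin n → ℝ) ∈ G := by
    rw [hG]
    exact ⟨le_rfl, fun i => (hg i 0 y le_rfl hyG.1).trans (hyG.2 i)⟩
  have h0A : (0 : ℝ) ∈ A := ⟨le_rfl, by simpa using h0G⟩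
  -- boundedness of A
  obtain ⟨C, hC⟩ : ∃ C, ∀ z ∈ G, ‖z‖ ≤ C := hcomp.isBounded.exists_norm_le
  have hAsub : A ⊆ Set.Icc 0 (C / ‖x‖) := by
    rintro a ⟨ha0, haG⟩
    refine ⟨ha0, ?_⟩
    have := hC _ haG
    rw [norm_smul, Real.norm_eq_abs, abs_of_nonneg ha0] at this
    exact (le_div_iff₀ hxnorm).mpr this
  have hAclosed : IsClosed A := by
    have h1 : IsClosed {a : ℝ | 0 ≤ a} := isClosed_Ici
    have h2 : IsClosed ((fun a : ℝ => a • x) ⁻¹' G) :=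
      hcomp.isClosed.preimage (continuous_id.smul continuous_const)
    exact h1.inter h2
  have hAcomp : IsCompact A := isCompact_Icc.of_isClosed_subset hAclosed hAsub
  have hAne : A.Nonempty := ⟨0, h0A⟩
  set s := sSup A with hs
  have hsA : s ∈ A := hAcomp.sSup_mem hAne
  have hs0 : 0 ≤ s := hsA.1
  -- it suffices to show scalar equality
  suffices hkey : s = ((⨆ i, radInv (g i) x (u i))⁻¹).toReal by
    rw [← hkey]
  rcases eq_or_lt_of_le hs0 with hs0' | hspos
  · -- s = 0 : show some radInv is ⊤
    have hex : ∃ i, {r : ℝ | 0 < r ∧ g i (r⁻¹ • x) ≤ u i} = ∅ := by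
      by_contra hcon
      push_neg at hcon
      have hcon' : ∀ i, ∃ r : ℝ, 0 < r ∧ g i (r⁻¹ • x) ≤ u i := by
        intro i
        obtain ⟨r, hr⟩ := hcon i
        exact ⟨r, hr⟩
      choose r hr1 hr2 using hcon'
      have huniv : (Finset.univ : Finset (Fin m)).Nonempty := ⟨⟨0, hm⟩, Finset.mem_univ _⟩
      set R := Finset.univ.sup' huniv r with hR
      have hRpos : 0 < R := lt_of_lt_of_le (hr1 ⟨0, hm⟩) (Finset.le_sup' r (Finset.mem_univ _))
      have hRA : R⁻¹ ∈ A := by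
        refine ⟨le_of_lt (inv_pos.mpr hRpos), ?_⟩
        rw [hG]
        constructor
        · intro j
          exact mul_nonneg (le_of_lt (inv_pos.mpr hRpos)) (hx j)
        · intro i
          have hle : r i ≤ R := Finset.le_sup' r (Finset.mem_univ i)
          have hinv : R⁻¹ ≤ (r i)⁻¹ := inv_anti₀ (hr1 i) hle
          have hsmul : R⁻¹ • x ≤ (r i)⁻¹ • x := by
            intro j
            exact mul_le_mul_of_nonneg_right hinv (hx j)
          have h0le : 0 ≤ R⁻¹ • x := fun j =>
            mul_nonneg (le_of_lt (inv_pos.mpr hRpos)) (hx j)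
          calc g i (R⁻¹ • x) ≤ g i ((r i)⁻¹ • x) := hg i _ _ h0le hsmul
            _ ≤ u i := hr2 i
      have : R⁻¹ ≤ s := le_csSup (hAcomp.isBounded.bddAbove) hRA
      rw [← hs0'] at this
      exact absurd this (not_le.mpr (inv_pos.mpr hRpos))
    obtain ⟨i, hi⟩ := hex
    have htop : radInv (g i) x (u i) = ⊤ := by
      rw [radInv, hi]; simp
    have hsup : (⨆ i, radInv (g i) x (u i)) = ⊤ :=
      top_unique (htop ▸ le_iSup (fun i => radInv (g i) x (u i)) i)
    rw [hsup, ← hs0']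
    simp
  · -- s > 0
    have hsinv : 0 < s⁻¹ := inv_pos.mpr hspos
    have hsupeq : (⨆ i, radInv (g i) x (u i)) = ENNReal.ofReal s⁻¹ := by
      apply le_antisymm
      · apply iSup_le
        intro i
        apply sInf_le
        refine ⟨s⁻¹, ⟨hsinv, ?_⟩, rfl⟩
        rw [inv_inv]
        have hsG := hsA.2
        rw [hG] at hsG
        exact hsG.2 i
      · by_contra hcon
        push_neg at hcon
        obtain ⟨t, ht0, htsup, hts⟩ := ENNReal.lt_iff_exists_real_btwn.mp hcon
        have htpos : 0 < t := by
          rcases lt_or_eq_of_le ht0 with h | h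
          · exact h
          · exfalso; rw [← h] at htsup; simp at htsup
        have hts' : t < s⁻¹ := by
          have := (ENNReal.ofReal_lt_ofReal_iff hsinv).mp hts
          exact this
        -- for each i, find r i ∈ R_i with r i < t
        have hexists : ∀ i, ∃ r : ℝ, (0 < r ∧ g i (r⁻¹ • x) ≤ u i) ∧ r < t := by
          intro i
          have hlt : radInv (g i) x (u i) < ENNReal.ofReal t :=
            lt_of_le_of_lt (le_iSup (fun i => radInv (g i) x (u i)) i) htsup
          rw [radInv] at hlt
          obtain ⟨b, hb, hblt⟩ := sInf_lt_iff.mp hlt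
          obtain ⟨r, hr, hbr⟩ := hb
          refine ⟨r, hr, ?_⟩
          rw [← hbr] at hblt
          exact (ENNReal.ofReal_lt_ofReal_iff htpos).mp hblt
        have htA : t⁻¹ ∈ A := by
          refine ⟨le_of_lt (inv_pos.mpr htpos), ?_⟩
          rw [hG]
          constructor
          · intro j; exact mul_nonneg (le_of_lt (inv_pos.mpr htpos)) (hx j)
          · intro i
            obtain ⟨r, ⟨hrpos, hrg⟩, hrt⟩ := hexists i
            have hinv : t⁻¹ ≤ r⁻¹ := le_of_lt (inv_strictAnti₀ hrpos hrt)
            have hsmul : t⁻¹ • x ≤ r⁻¹ • x := fun j =>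
              mul_le_mul_of_nonneg_right hinv (hx j)
            have h0le : 0 ≤ t⁻¹ • x := fun j =>
              mul_nonneg (le_of_lt (inv_pos.mpr htpos)) (hx j)
            exact (hg i _ _ h0le hsmul).trans hrg
        have h1 : t⁻¹ ≤ s := le_csSup (hAcomp.isBounded.bddAbove) htA
        have h2 : s⁻¹ ≤ t := by
          rw [← inv_inv t]
          exact inv_anti₀ (inv_pos.mpr htpos) h1
        exact absurd hts' (not_lt.mpr h2)
    rw [hsupeq, ← ENNReal.ofReal_inv_of_pos hsinv, inv_inv,
      ENNReal.toReal_ofReal hs0]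
end

section
/- Let h : ℝ₊ⁿ × ℝ → [0,∞] satisfy: (i) h(αx, y) = α·h(x, y) for all α > 0; (ii) h is increasing in x and decreasing in y; (iii) h is right-continuous in y; (iv) for all x there exist y > y' with h(x,y) ≤ 1 and h(x,y') > 1. Then there exists an increasing function g : ℝ₊ⁿ → ℝ such that h = ρ_g, i.e., h(x,y) = inf{r > 0 : g(x/r) ≤ y} for all (x,y). Moreover, g can be taken as g(x) = inf{y ∈ ℝ : h(x,y) ≤ 1}. -/
open scoped ENNReal

theorem stmt7 {n : ℕ} (h : (Fin n → ℝ) → ℝ → ℝ≥0∞)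
    (hhom : ∀ α : ℝ, 0 < α → ∀ x : Fin n → ℝ, 0 ≤ x → ∀ y : ℝ,
      h (α • x) y = ENNReal.ofReal α * h x y)
    (hmonox : ∀ x x' : Fin n → ℝ, 0 ≤ x → x ≤ x' → ∀ y : ℝ, h x y ≤ h x' y)
    (hmonoy : ∀ x : Fin n → ℝ, 0 ≤ x → ∀ y y' : ℝ, y ≤ y' → h x y' ≤ h x y)
    (hrc : ∀ x : Fin n → ℝ, 0 ≤ x → ∀ y : ℝ,
      Filter.Tendsto (fun ε : ℝ => h x (y + ε)) (nhdsWithin 0 (Set.Ioi 0)) (nhds (h x y)))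
    (hwp : ∀ x : Fin n → ℝ, 0 ≤ x → ∃ y y' : ℝ, y' < y ∧ h x y ≤ 1 ∧ 1 < h x y') :
    ∃ g : (Fin n → ℝ) → ℝ,
      (∀ a b : Fin n → ℝ, 0 ≤ a → a ≤ b → g a ≤ g b) ∧
      (∀ x : Fin n → ℝ, 0 ≤ x → ∀ y : ℝ, h x y = radInv g x y) ∧
      (∀ x : Fin n → ℝ, 0 ≤ x → g x = sInf {y : ℝ | h x y ≤ 1}) := by
  set g : (Fin n → ℝ) → ℝ := fun x => sInf {y : ℝ | h x y ≤ 1} with hg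
  have hne : ∀ x : Fin n → ℝ, 0 ≤ x → {y : ℝ | h x y ≤ 1}.Nonempty := by
    intro x hx
    obtain ⟨y, y', _, hy, _⟩ := hwp x hx
    exact ⟨y, hy⟩
  have hbdd : ∀ x : Fin n → ℝ, 0 ≤ x → BddBelow {y : ℝ | h x y ≤ 1} := by
    intro x hx
    obtain ⟨y, y', _, _, hy'⟩ := hwp x hx
    refine ⟨y', fun z hz => ?_⟩
    by_contra hc
    push_neg at hc
    exact absurd (le_trans (hmonoy x hx z y' hc.le) hz) (not_le.2 hy')
  -- key : h x y ≤ 1 ↔ g x ≤ y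
  have key : ∀ x : Fin n → ℝ, 0 ≤ x → ∀ y : ℝ, (h x y ≤ 1 ↔ g x ≤ y) := by
    intro x hx y
    constructor
    · intro hy
      exact csInf_le (hbdd x hx) hy
    · intro hy
      have hev : ∀ ε ∈ Set.Ioi (0:ℝ), h x (y + ε) ≤ 1 := by
        intro ε hε
        have : g x < y + ε := lt_of_le_of_lt hy (by linarith [Set.mem_Ioi.1 hε])
        obtain ⟨s, hs, hs'⟩ := exists_lt_of_csInf_lt (hne x hx) this
        exact le_trans (hmonoy x hx s (y + ε) hs'.le) hs
      refine le_of_tendsto (hrc x hx y) ?_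
      filter_upwards [self_mem_nhdsWithin] using hev
  refine ⟨g, ?_, ?_, fun x _ => rfl⟩
  · intro a b ha hab
    refine csInf_le_csInf (hbdd a ha) (hne b (le_trans ha hab)) ?_
    intro z hz
    exact le_trans (hmonox a b ha hab z) hz
  · intro x hx y
    have hset : {r : ℝ | 0 < r ∧ g (r⁻¹ • x) ≤ y} = {r : ℝ | 0 < r ∧ h x y ≤ ENNReal.ofReal r} := by
      ext r
      simp only [Set.mem_setOf_eq]
      refine and_congr_right fun hr => ?_
      have hxr : (0:Fin n → ℝ) ≤ r⁻¹ • x := smul_nonneg (by positivity) hx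
      rw [← key _ hxr y, hhom r⁻¹ (by positivity) x hx y,
        ENNReal.ofReal_inv_of_pos hr,
        ENNReal.inv_mul_le_iff (by simp [hr]) (by simp), mul_one]
    rw [radInv, hset]
    rcases eq_top_or_lt_top (h x y) with htop | hlt
    · rw [htop]
      rw [show ENNReal.ofReal '' {r : ℝ | 0 < r ∧ (⊤:ℝ≥0∞) ≤ ENNReal.ofReal r} = ∅ from ?_]
      · exact sInf_empty.symm
      rw [Set.image_eq_empty]
      ext r
      simp [htop]
    · apply le_antisymm
      · refine le_sInf ?_
        rintro a ⟨r, ⟨_, hr2⟩, rfl⟩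
        exact hr2
      · rcases eq_or_ne (h x y) 0 with h0 | h0
        · rw [h0]
          refine ENNReal.le_of_forall_pos_le_add fun ε hε _ => ?_
          have hmem : (ENNReal.ofReal (ε:ℝ)) ∈
              ENNReal.ofReal '' {r : ℝ | 0 < r ∧ (0:ℝ≥0∞) ≤ ENNReal.ofReal r} :=
            ⟨(ε:ℝ), ⟨by exact_mod_cast hε, zero_le⟩, rfl⟩
          calc sInf _ ≤ ENNReal.ofReal (ε:ℝ) := sInf_le hmem
            _ ≤ 0 + ε := by simp [ENNReal.ofReal_coe_nnreal]
        · have hrpos : 0 < (h x y).toReal := ENNReal.toReal_pos h0 hlt.ne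
          refine sInf_le ⟨(h x y).toReal, ⟨hrpos, ?_⟩, ENNReal.ofReal_toReal hlt.ne⟩
          rw [ENNReal.ofReal_toReal hlt.ne]
end
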